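/- (Hoggatt–Long) For all positive integers m and n: m divides n if and only if the Lucas polynomial {m} divides {n} in Z[s,t]. Moreover, when m divides n, the quotient {n}/{m} is a polynomial in s and t all of whose coefficients are nonnegative integers. -/
import Mathlib


open MvPolynomial Finset

noncomputable section

/-- Polynomial ring ℤ[s,t] with s = X 0, t = X 1. -/
abbrev P2 : Type := MvPolynomial (Fin 2) ℤ

def ps : P2 := X 0
def pt : P2 := X 1

/-- The Lucas sequence of polynomials: {0}=0, {1}=1, {n}=s{n-1}+t{n-2}. -/
def lucas : ℕ → P2
  | 0 => 0
  | 1 => 1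
  | (n+2) => ps * lucas (n+1) + pt * lucas n

/-- The Lucastorial {n}! = {1}{2}⋯{n}. -/
def lucasFact (n : ℕ) : P2 := ∏ i ∈ Finset.range n, lucas (i+1)

/-- The d-divisible Lucastorial {n:d}! = {d}{2d}⋯{nd}. -/
def lucasFactD (d n : ℕ) : P2 := ∏ i ∈ Finset.range n, lucas (d*(i+1))

/-- A polynomial lies in ℕ[s,t]: all coefficients are nonnegative. -/
def Nonneg (p : P2) : Prop := ∀ m, 0 ≤ p.coeff m

/-- The fraction field ℤ(s,t). -/
abbrev K : Type := FractionRing P2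

def φ : P2 →+* K := algebraMap P2 K

def L (n : ℕ) : K := φ (lucas n)

def LFact (n : ℕ) : K := φ (lucasFact n)

def LFactD (d n : ℕ) : K := φ (lucasFactD d n)

/-- The Lucasnomial {n choose k}, as an element of the fraction field. -/
def lnom (n k : ℕ) : K := LFact n / (LFact k * LFact (n-k))

/-- The d-divisible Lucasnomial {n:d choose k:d}, as an element of the fraction field. -/
def lnomD (d n k : ℕ) : K := LFactD d n / (LFactD d k * LFactD d (n-k))

/-- The Lucas-Catalan number C_{n} = (1/{n+1}) {2n choose n}. -/
def catL (n : ℕ) : K := lnom (2*n) n / L (n+1)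

/-- The Lucas-Fuss-Catalan number C_{n,k} = (1/{kn+1}) {(k+1)n choose n}. -/
def fussCatL (n k : ℕ) : K := lnom ((k+1)*n) n / L (k*n+1)

lemma lucas_rec (n : ℕ) : lucas (n+2) = ps * lucas (n+1) + pt * lucas n := rfl

lemma nonneg_add {p q : P2} (hp : Nonneg p) (hq : Nonneg q) : Nonneg (p + q) := by
  intro m; rw [coeff_add]; exact add_nonneg (hp m) (hq m)

lemma nonneg_mul {p q : P2} (hp : Nonneg p) (hq : Nonneg q) : Nonneg (p * q) := by
  intro m; rw [coeff_mul]
  exact Finset.sum_nonneg fun x _ => mul_nonneg (hp _) (hq _)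

lemma nonneg_zero : Nonneg (0 : P2) := fun m => by simp

lemma nonneg_one : Nonneg (1 : P2) := by
  intro m; rw [coeff_one]; split <;> norm_num

lemma nonneg_X (i : Fin 2) : Nonneg (X i : P2) := by
  classical
  intro m; rw [coeff_X']; split <;> norm_num

lemma nonneg_lucas : ∀ n, Nonneg (lucas n)
  | 0 => nonneg_zero
  | 1 => nonneg_one
  | (n+2) => by
      rw [lucas_rec]
      exact nonneg_add (nonneg_mul (nonneg_X 0) (nonneg_lucas (n+1)))
        (nonneg_mul (nonneg_X 1) (nonneg_lucas n))

lemma lucas_add : ∀ a b : ℕ, lucas (a + b + 1) = lucas (a+1) * lucas (b+1) + pt * lucas a * lucas b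
  | 0, b => by simp [lucas]
  | 1, b => by
      have h : 1 + b + 1 = b + 2 := by omega
      rw [h, lucas_rec]
      have : lucas 2 = ps := by simp [lucas_rec, lucas]
      rw [this]
      simp [lucas]
  | (a+2), b => by
      have h1 : a + 2 + b + 1 = (a + b + 1) + 2 := by omega
      rw [h1, lucas_rec]
      have h2 : a + b + 1 + 1 = (a+1) + b + 1 := by omega
      rw [h2, lucas_add (a+1) b, lucas_add a b]
      have e3 : lucas (a+2+1) = ps * lucas (a+2) + pt * lucas (a+1) := lucas_rec (a+1)
      rw [e3, lucas_rec a]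
      ring

lemma lucas_cat : ∀ a : ℕ, lucas (a+2) * lucas a + (-1)^a * pt^a = lucas (a+1)^2 := by
  intro a
  induction a with
  | zero => simp [lucas]
  | succ a ih =>
      have e1 : lucas (a+1+2) = ps * lucas (a+2) + pt * lucas (a+1) := lucas_rec (a+1)
      have e2 : lucas (a+2) = ps * lucas (a+1) + pt * lucas a := lucas_rec a
      rw [e2] at ih
      rw [e1, e2]
      linear_combination (-pt) * ih

lemma lucas_dvd_mul (m : ℕ) (hm : 0 < m) :
    ∀ q, ∃ p : P2, Nonneg p ∧ lucas (q * m) = p * lucas m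
  | 0 => ⟨0, nonneg_zero, by simp [lucas]⟩
  | (q+1) => by
      obtain ⟨p, hp, he⟩ := lucas_dvd_mul m hm q
      obtain ⟨m', rfl⟩ : ∃ m', m = m' + 1 := ⟨m-1, by omega⟩
      have hsum : (q+1) * (m'+1) = q * (m'+1) + m' + 1 := by ring
      refine ⟨lucas (q*(m'+1)+1) + pt * p * lucas m', ?_, ?_⟩
      · exact nonneg_add (nonneg_lucas _)
          (nonneg_mul (nonneg_mul (nonneg_X 1) hp) (nonneg_lucas _))
      · rw [hsum, lucas_add (q*(m'+1)) m', he]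
        ring

/-- Evaluation s ↦ 2, t ↦ 1. -/
def χ : P2 →+* ℤ := eval ![2, 1]

lemma chi_ps : χ ps = 2 := by simp [χ, ps]
lemma chi_pt : χ pt = 1 := by simp [χ, pt]

lemma chi_lucas_rec (n : ℕ) : χ (lucas (n+2)) = 2 * χ (lucas (n+1)) + χ (lucas n) := by
  rw [lucas_rec]; push_cast [map_add, map_mul, chi_ps, chi_pt]; ring

lemma chi_lucas_pos : ∀ n, 0 ≤ χ (lucas n) ∧ χ (lucas n) < χ (lucas (n+1))
  | 0 => by simp [lucas]
  | (n+1) => by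
      obtain ⟨h0, h1⟩ := chi_lucas_pos n
      refine ⟨by linarith, ?_⟩
      rw [chi_lucas_rec]
      linarith

lemma chi_lucas_mono : StrictMono (fun n => χ (lucas n)) :=
  strictMono_nat_of_lt_succ fun n => (chi_lucas_pos n).2

lemma chi_lucas_pos' {n : ℕ} (hn : 0 < n) : 0 < χ (lucas n) := by
  have := chi_lucas_mono (show 0 < n from hn)
  simpa [lucas] using this

lemma lucas_dvd_imp (m n : ℕ) (hm : 0 < m) (hn : 0 < n)
    (h : lucas m ∣ lucas n) : m ∣ n := by
  by_contra hnd
  have hr0 : n % m ≠ 0 := fun h0 => hnd (Nat.dvd_of_mod_eq_zero h0)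
  have hrm : n % m < m := Nat.mod_lt n hm
  set r := n % m with hr
  set q := n / m with hq
  have hdvd_r : χ (lucas m) ∣ χ (lucas r) := by
    have h' : q * m + r = n := by rw [hq, hr, Nat.mul_comm]; exact Nat.div_add_mod n m
    rcases Nat.eq_zero_or_pos q with hq0 | hq1
    · rw [hq0, Nat.zero_mul, Nat.zero_add] at h'
      rw [h']
      exact map_dvd χ h
    · -- q ≥ 1, a := q*m = b+1
      obtain ⟨b, hab⟩ : ∃ b, q * m = b + 1 := ⟨q*m - 1, by
        have : 1 ≤ q * m := Nat.one_le_iff_ne_zero.mpr (by positivity)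
        omega⟩
      obtain ⟨r', hrr⟩ : ∃ r', r = r' + 1 := ⟨r - 1, by omega⟩
      have hn' : n = (b+1) + r' + 1 := by omega
      have hadd := lucas_add (b+1) r'
      rw [← hn', ← hrr] at hadd
      have haddχ : χ (lucas n) = χ (lucas (b+1+1)) * χ (lucas r)
          + χ (lucas (b+1)) * χ (lucas r') := by
        rw [hadd]; simp [map_add, map_mul, chi_pt]
      obtain ⟨p, _, hp⟩ := lucas_dvd_mul m hm q
      have da : χ (lucas m) ∣ χ (lucas (b+1)) := by
        rw [← hab]
        exact map_dvd χ ⟨p, by rw [hp, mul_comm]⟩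
      have d1 : χ (lucas m) ∣ χ (lucas n) := map_dvd χ h
      have d2 : χ (lucas m) ∣ χ (lucas (b+1+1)) * χ (lucas r) := by
        have e : χ (lucas (b+1+1)) * χ (lucas r)
            = χ (lucas n) - χ (lucas (b+1)) * χ (lucas r') := by
          linarith [haddχ]
        rw [e]
        exact dvd_sub d1 (da.mul_right _)
      have catχ : χ (lucas (b+2)) * χ (lucas b) + (-1)^b = χ (lucas (b+1))^2 := by
        have := congrArg χ (lucas_cat b)
        simpa [map_add, map_mul, map_pow, chi_pt] using this
      have d4 : χ (lucas m) ∣ χ (lucas (b+1))^2 * χ (lucas r) := by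
        have : χ (lucas (b+1))^2 * χ (lucas r)
            = χ (lucas (b+1)) * (χ (lucas (b+1)) * χ (lucas r)) := by ring
        rw [this]
        exact da.mul_right _
      have d5 : χ (lucas m) ∣ χ (lucas (b+1+1)) * χ (lucas r) * χ (lucas b) :=
        d2.mul_right _
      have key : χ (lucas m) ∣ (-1)^b * χ (lucas r) := by
        have e : (-1)^b * χ (lucas r)
            = χ (lucas (b+1))^2 * χ (lucas r)
              - χ (lucas (b+1+1)) * χ (lucas r) * χ (lucas b) := by
          rw [show b+1+1 = b+2 from rfl]
          linear_combination χ (lucas r) * catχ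
        rw [e]
        exact dvd_sub d4 d5
      rcases Nat.even_or_odd b with hb | hb
      · rwa [hb.neg_one_pow, one_mul] at key
      · rw [hb.neg_one_pow, neg_one_mul] at key
        exact (dvd_neg).mp key
  have h1 : 0 < χ (lucas r) := chi_lucas_pos' (by omega)
  have h2 : χ (lucas r) < χ (lucas m) := chi_lucas_mono hrm
  have := Int.le_of_dvd h1 hdvd_r
  omega

theorem hoggatt_long_aux (m n : ℕ) (hm : 0 < m) (hn : 0 < n) :
    (m ∣ n ↔ lucas m ∣ lucas n) ∧
    (m ∣ n → ∃ p : P2, Nonneg p ∧ lucas n = p * lucas m) := by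
  have fwd : m ∣ n → ∃ p : P2, Nonneg p ∧ lucas n = p * lucas m := by
    rintro ⟨q, rfl⟩
    obtain ⟨p, hp, he⟩ := lucas_dvd_mul m hm q
    exact ⟨p, hp, by rwa [mul_comm m q]⟩
  refine ⟨⟨fun h => ?_, fun h => lucas_dvd_imp m n hm hn h⟩, fwd⟩
  obtain ⟨p, _, he⟩ := fwd h
  exact ⟨p, by rw [he, mul_comm]⟩

/-- Hoggatt–Long: for positive m, n: m ∣ n iff {m} ∣ {n} in ℤ[s,t],
and in that case the quotient lies in ℕ[s,t]. -/
theorem hoggatt_long (m n : ℕ) (hm : 0 < m) (hn : 0 < n) :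
    (m ∣ n ↔ lucas m ∣ lucas n) ∧
    (m ∣ n → ∃ p : P2, Nonneg p ∧ lucas n = p * lucas m) :=
  hoggatt_long_aux m n hm hn
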